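/- Let Q : ℝⁿ → ℝⁿ be C² on a neighborhood of 0 and assume: (a) Q(t e₁) = 0 for all sufficiently small |t| (weak degeneracy of the source along the first characteristic trajectory through 0); (b) ∂Qᵢ/∂u_q(0) = 0 and ∂Q_q/∂uᵢ(0) = 0 for all 1 ≤ q ≤ r and 1 ≤ i ≤ n. Then there exist constants C > 0 and δ > 0 such that for all u with |u| ≤ δ: (i) |Q_q(u)| ≤ C |u^♭| |u| for every 1 ≤ q ≤ r; (ii) |Q_p(u) − Σ_{p'=r+1}^{n} ∂Q_p/∂u_{p'}(0) u_{p'}| ≤ C |u^♭| |u| for every r+1 ≤ p ≤ n. -/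

import Mathlib

open Matrix
open Topology

/-- The norm of the part `u^♭ = (u₂, …, uₙ)` of a vector `u ∈ ℝⁿ`
(the remaining components being put to zero). -/
noncomputable def normFlat {n : ℕ} (u : Fin n → ℝ) : ℝ :=
  ‖(fun i : Fin n => if 1 ≤ (i : ℕ) then u i else 0)‖

/-- The norm of the part `u^D = (u_{r+1}, …, uₙ)` of a vector `u ∈ ℝⁿ`
(the remaining components being put to zero). -/
noncomputable def normTail {n : ℕ} (r : ℕ) (u : Fin n → ℝ) : ℝ :=
  ‖(fun i : Fin n => if r ≤ (i : ℕ) then u i else 0)‖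

/-- Quadratic expansion of a weakly degenerate source term: if `Q` is `C²`
near `0`, vanishes along the first axis near `0`, and the rows and columns `1,…,r` of
`∇Q(0)` vanish, then near `0` one has `|Q_q(u)| ≤ C|u^♭||u|` for `q ≤ r` and
`|Q_p(u) − Σ_{p'>r} ∂Q_p/∂u_{p'}(0) u_{p'}| ≤ C|u^♭||u|` for `p > r`. -/
theorem statement8 (n r : ℕ) (hn : 2 ≤ n) (hr : 1 ≤ r) (hrn : r < n)
    (Q : (Fin n → ℝ) → (Fin n → ℝ))
    (hQ : ContDiffAt ℝ 2 Q 0)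
    (ha : ∃ ε > 0, ∀ t : ℝ, |t| < ε →
      Q (t • (Pi.single (⟨0, by omega⟩ : Fin n) 1 : Fin n → ℝ)) = 0)
    (hb : ∀ q i : Fin n, (q : ℕ) < r →
      fderiv ℝ Q 0 (Pi.single q 1) i = 0 ∧ fderiv ℝ Q 0 (Pi.single i 1) q = 0) :
    ∃ C > 0, ∃ δ > 0, ∀ u : Fin n → ℝ, ‖u‖ ≤ δ →
      (∀ q : Fin n, (q : ℕ) < r → |Q u q| ≤ C * normFlat u * ‖u‖) ∧
      (∀ p : Fin n, r ≤ (p : ℕ) →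
        |Q u p - ∑ p' : Fin n,
            (if r ≤ (p' : ℕ) then fderiv ℝ Q 0 (Pi.single p' 1) p * u p' else 0)|
          ≤ C * normFlat u * ‖u‖) := by
  classical
  obtain ⟨ε, hε, haxis⟩ := ha
  set i0 : Fin n := ⟨0, by omega⟩ with hi0
  set L := fderiv ℝ Q 0 with hL
  -- Lipschitz bound on the derivative near 0
  obtain ⟨K, t, ht, hlip⟩ :
      ∃ K : NNReal, ∃ t ∈ 𝓝 (0 : Fin n → ℝ), LipschitzOnWith K (fderiv ℝ Q) t :=
    (hQ.fderiv_right (by norm_num)).exists_lipschitzOnWith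
  have hev : ∀ᶠ v in 𝓝 (0 : Fin n → ℝ), DifferentiableAt ℝ Q v :=
    (hQ.eventually (by simp)).mono fun v hv => hv.differentiableAt (by norm_num)
  obtain ⟨δ₀, hδ₀, hball⟩ : ∃ δ₀ > 0, Metric.closedBall (0 : Fin n → ℝ) δ₀ ⊆
      t ∩ {v | DifferentiableAt ℝ Q v} :=
    (Metric.nhds_basis_closedBall.mem_iff).1 (Filter.inter_mem ht hev)
  refine ⟨K + 1, by positivity, min δ₀ (ε / 2), by positivity, fun u hu => ?_⟩
  have hu0 : ‖u‖ ≤ δ₀ := le_trans hu (min_le_left _ _)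
  have huε : ‖u‖ < ε := lt_of_le_of_lt (le_trans hu (min_le_right _ _)) (by linarith)
  -- the endpoint on the first axis
  set a : Fin n → ℝ := (u i0) • (Pi.single i0 1 : Fin n → ℝ) with haa
  have hui0 : |u i0| ≤ ‖u‖ := by
    have := norm_le_pi_norm u i0
    simpa using this
  have hanorm : ‖a‖ ≤ ‖u‖ := by
    rw [haa, norm_smul, Pi.norm_single]
    simpa using hui0
  -- the convex set for the mean value inequality
  set s : Set (Fin n → ℝ) := Metric.closedBall 0 ‖u‖ with hs
  have hsub : s ⊆ Metric.closedBall (0 : Fin n → ℝ) δ₀ :=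
    Metric.closedBall_subset_closedBall hu0
  have hdiff : ∀ x ∈ s, DifferentiableAt ℝ (fun v => Q v - L v) x := by
    intro x hx
    exact ((hball (hsub hx)).2).sub (L.differentiableAt)
  have hbound : ∀ x ∈ s, ‖fderiv ℝ (fun v => Q v - L v) x‖ ≤ (K : ℝ) * ‖u‖ := by
    intro x hx
    have hx' := hball (hsub hx)
    rw [fderiv_fun_sub hx'.2 L.differentiableAt, L.fderiv]
    have h0t : (0 : Fin n → ℝ) ∈ t := mem_of_mem_nhds ht
    have := hlip.dist_le_mul x hx'.1 0 h0t
    rw [dist_eq_norm, dist_eq_norm, sub_zero] at this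
    calc ‖fderiv ℝ Q x - L‖ = ‖fderiv ℝ Q x - fderiv ℝ Q 0‖ := by rw [hL]
      _ ≤ (K : ℝ) * ‖x‖ := this
      _ ≤ (K : ℝ) * ‖u‖ := by
          have : ‖x‖ ≤ ‖u‖ := by simpa [hs, dist_eq_norm] using hx
          exact mul_le_mul_of_nonneg_left this K.coe_nonneg
  have hus : u ∈ s := by simp [hs]
  have has : a ∈ s := by simpa [hs, dist_eq_norm] using hanorm
  have hmvt := (convex_closedBall (0 : Fin n → ℝ) ‖u‖).norm_image_sub_le_of_norm_fderiv_le
    hdiff hbound has hus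
  -- the endpoint value vanishes
  have hQa : Q a = 0 := haxis (u i0) (lt_of_le_of_lt hui0 huε)
  have hLe0 : L (Pi.single i0 1) = 0 := by
    funext i
    exact (hb i0 i (by rw [hi0]; exact hr)).1
  have hga : Q a - L a = 0 := by
    rw [hQa, haa, L.map_smul, hLe0, smul_zero, sub_zero]
  -- identify ‖u - a‖ with normFlat u
  have hflat : (fun i : Fin n => if 1 ≤ (i : ℕ) then u i else 0) = u - a := by
    funext i
    rcases eq_or_ne i i0 with h | h
    · subst h
      simp [haa, hi0, Pi.single_apply]
    · have h1 : 1 ≤ (i : ℕ) := by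
        rcases Nat.eq_zero_or_pos (i : ℕ) with h0 | h0
        · exact absurd (Fin.ext h0) h
        · exact h0
      simp [haa, Pi.single_apply, h, h1, Ne.symm]
  have hkey : ‖Q u - L u‖ ≤ (K : ℝ) * ‖u‖ * normFlat u := by
    have := hmvt
    rw [hga, sub_zero] at this
    calc ‖Q u - L u‖ = ‖(Q u - L u) - 0‖ := by rw [sub_zero]
      _ ≤ (K : ℝ) * ‖u‖ * ‖u - a‖ := by simpa using this
      _ = (K : ℝ) * ‖u‖ * normFlat u := by rw [normFlat, hflat]
  have hcomp : ∀ p : Fin n, |Q u p - L u p| ≤ (K : ℝ) * ‖u‖ * normFlat u := by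
    intro p
    calc |Q u p - L u p| = ‖(Q u - L u) p‖ := by simp [Real.norm_eq_abs]
      _ ≤ ‖Q u - L u‖ := norm_le_pi_norm _ p
      _ ≤ _ := hkey
  have hLu : ∀ p : Fin n, L u p = ∑ i : Fin n, u i * L (Pi.single i 1) p := by
    intro p
    have hu' : u = ∑ i : Fin n, u i • (Pi.single i 1 : Fin n → ℝ) := by
      conv_lhs => rw [← Finset.univ_sum_single u]
      refine Finset.sum_congr rfl fun i _ => ?_
      ext j
      simp [Pi.single_apply]
    conv_lhs => rw [hu']
    rw [map_sum]
    simp [Finset.sum_apply]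
  have hnf : 0 ≤ normFlat u := norm_nonneg _
  have hcoef : (K : ℝ) * ‖u‖ * normFlat u ≤ ((K : ℝ) + 1) * normFlat u * ‖u‖ := by
    have h1 : (K : ℝ) ≤ (K : ℝ) + 1 := by linarith
    nlinarith [norm_nonneg u, K.coe_nonneg]
  constructor
  · intro q hq
    have hzero : L u q = 0 := by
      rw [hLu]
      refine Finset.sum_eq_zero fun i _ => ?_
      rw [(hb q i hq).2, mul_zero]
    have := hcomp q
    rw [hzero, sub_zero] at this
    exact le_trans this hcoef
  · intro p hp
    have hsum : (∑ p' : Fin n,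
        (if r ≤ (p' : ℕ) then fderiv ℝ Q 0 (Pi.single p' 1) p * u p' else 0)) = L u p := by
      rw [hLu]
      refine Finset.sum_congr rfl fun i _ => ?_
      by_cases h : r ≤ (i : ℕ)
      · rw [if_pos h, ← hL, mul_comm]
      · rw [if_neg h, (hb i p (lt_of_not_ge h)).1, mul_zero]
    rw [hsum]
    exact le_trans (hcomp p) hcoef
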